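/- Let ρ_AB = ∑_i p_i φ_{A,i} ⊗ σ_{AB,i} be a bipartite density matrix on (H_{A'} ⊗ H_{A''}) ⊗ H_B (all finite-dimensional), where the p_i ≥ 0 sum to 1, each φ_{A,i} is a density matrix on H_{A'}, the φ_{A,i} are mutually orthogonal (φ_{A,i} φ_{A,j} = 0 for i ≠ j), and each σ_{AB,i} is a density matrix on H_{A''} ⊗ H_B. Then the negativity across the A|B cut satisfies N[ρ_AB] = ∑_i p_i N[σ_{AB,i}], where the partial transpose is taken on the B factor in both cases. -/

import Mathlib

open Matrix Kronecker
open scoped ComplexOrder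

/-- The matrix absolute value `|M| := √(Mᴴ M)`. -/
noncomputable def matAbs {n : Type*} [Fintype n] [DecidableEq n]
    (M : Matrix n n ℂ) : Matrix n n ℂ :=
  (Matrix.posSemidef_conjTranspose_mul_self M).1.eigenvectorUnitary.1 *
    Matrix.diagonal ((↑) ∘ (Real.sqrt ∘ (Matrix.posSemidef_conjTranspose_mul_self M).1.eigenvalues)) *
    (star (Matrix.posSemidef_conjTranspose_mul_self M).1.eigenvectorUnitary : Matrix n n ℂ)

/-- The trace norm `‖M‖₁ := Tr √(Mᴴ M)`. -/
noncomputable def traceNorm {n : Type*} [Fintype n] [DecidableEq n]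
    (M : Matrix n n ℂ) : ℂ :=
  (matAbs M).trace

/-- Partial transpose on the second factor of a bipartite matrix. -/
def ptB {a b : Type*} (ρ : Matrix (a × b) (a × b) ℂ) : Matrix (a × b) (a × b) ℂ :=
  Matrix.of fun x y => ρ (x.1, y.2) (y.1, x.2)

/-- Negativity of a bipartite matrix on `H_A ⊗ H_B`, with partial transpose on `B`:
`N[ρ] := (1/2)(‖ρ^{T_B}‖₁ − Tr ρ)`. -/
noncomputable def negativityAB {a b : Type*} [Fintype a] [DecidableEq a]
    [Fintype b] [DecidableEq b] (ρ : Matrix (a × b) (a × b) ℂ) : ℂ :=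
  (1 / 2 : ℂ) * (traceNorm (ptB ρ) - ρ.trace)

/-- Partial transpose on the third (B) factor of a tripartite matrix on
`H_{A'} ⊗ H_{A''} ⊗ H_B`. -/
def ptB3 {a' a'' b : Type*} (ρ : Matrix (a' × a'' × b) (a' × a'' × b) ℂ) :
    Matrix (a' × a'' × b) (a' × a'' × b) ℂ :=
  Matrix.of fun x y => ρ (x.1, x.2.1, y.2.2) (y.1, y.2.1, x.2.2)

/-- Negativity across the `A|B` cut of a matrix on `(H_{A'} ⊗ H_{A''}) ⊗ H_B`,
with partial transpose on `B`. -/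
noncomputable def negativityA'A''B {a' a'' b : Type*} [Fintype a'] [DecidableEq a']
    [Fintype a''] [DecidableEq a''] [Fintype b] [DecidableEq b]
    (ρ : Matrix (a' × a'' × b) (a' × a'' × b) ℂ) : ℂ :=
  (1 / 2 : ℂ) * (traceNorm (ptB3 ρ) - ρ.trace)

/-! ### Auxiliary lemmas -/

lemma psd_realSmul {n : Type*} [Fintype n] (c : ℝ) (hc : 0 ≤ c)
    {A : Matrix n n ℂ} (hA : A.PosSemidef) : ((c : ℂ) • A).PosSemidef := by
  constructor
  · unfold Matrix.IsHermitian
    rw [conjTranspose_smul, hA.1.eq]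
    congr 1
    simp
  · intro x
    exact (hA.smul (a := (c : ℂ)) (by exact_mod_cast hc)).2 x

lemma kron_conjTranspose {l m n p : Type*} (A : Matrix l m ℂ) (B : Matrix n p ℂ) :
    (A ⊗ₖ B)ᴴ = Aᴴ ⊗ₖ Bᴴ := by
  ext ⟨x1, x2⟩ ⟨y1, y2⟩
  simp [conjTranspose_apply, kroneckerMap_apply, mul_comm]

lemma psd_kron {m n : Type*} [Fintype m] [DecidableEq m] [Fintype n] [DecidableEq n]
    {A : Matrix m m ℂ} {B : Matrix n n ℂ} (hA : A.PosSemidef) (hB : B.PosSemidef) :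
    (A ⊗ₖ B).PosSemidef := by
  exact hA.kronecker hB

lemma psd_sum {n ι : Type*} [Fintype n] [Fintype ι] {f : ι → Matrix n n ℂ}
    (hf : ∀ i, (f i).PosSemidef) : (∑ i, f i).PosSemidef := by
  classical
  refine Finset.sum_induction f Matrix.PosSemidef (fun a b ha hb => ha.add hb)
    Matrix.PosSemidef.zero (fun i _ => hf i)

section MatAbsAux
open scoped MatrixOrder

lemma matAbs_eq_sqrt {n : Type*} [Fintype n] [DecidableEq n] (M : Matrix n n ℂ) :
    matAbs M = CFC.sqrt (Mᴴ * M) := by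
  rw [CFC.sqrt_eq_real_sqrt _ (posSemidef_conjTranspose_mul_self M).nonneg, cfcₙ_eq_cfc,
    (posSemidef_conjTranspose_mul_self M).1.cfc_eq]
  rfl

lemma matAbs_psd {n : Type*} [Fintype n] [DecidableEq n] (M : Matrix n n ℂ) :
    (matAbs M).PosSemidef := by
  rw [matAbs_eq_sqrt]
  exact (CFC.sqrt_nonneg _).posSemidef

lemma matAbs_mul_self {n : Type*} [Fintype n] [DecidableEq n] (M : Matrix n n ℂ) :
    matAbs M * matAbs M = Mᴴ * M := by
  rw [matAbs_eq_sqrt]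
  exact CFC.sqrt_mul_sqrt_self _ (posSemidef_conjTranspose_mul_self M).nonneg

lemma matAbs_eq {n : Type*} [Fintype n] [DecidableEq n] {M S : Matrix n n ℂ}
    (hS : S.PosSemidef) (h : S * S = Mᴴ * M) : matAbs M = S := by
  rw [matAbs_eq_sqrt]
  exact (CFC.sqrt_eq_iff _ _ (posSemidef_conjTranspose_mul_self M).nonneg hS.nonneg).mpr h

end MatAbsAux

/-- For `ρ_AB = ∑ i, p i • φ_{A,i} ⊗ σ_{AB,i}` with mutually orthogonal density
matrices `φ_{A,i}` on `H_{A'}` and density matrices `σ_{AB,i}` on `H_{A''} ⊗ H_B`,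
the negativity across the `A|B` cut is `N[ρ_AB] = ∑ i, p i * N[σ_{AB,i}]`. -/
theorem negativity_sum_orthogonal
    {ι a' a'' b : Type*} [Fintype ι] [Fintype a'] [DecidableEq a']
    [Fintype a''] [DecidableEq a''] [Fintype b] [DecidableEq b]
    (p : ι → ℝ) (φ : ι → Matrix a' a' ℂ) (σ : ι → Matrix (a'' × b) (a'' × b) ℂ)
    (hp : ∀ i, 0 ≤ p i) (hpsum : ∑ i, p i = 1)
    (hφpos : ∀ i, (φ i).PosSemidef) (hφtr : ∀ i, (φ i).trace = 1)
    (hφorth : ∀ i j, i ≠ j → φ i * φ j = 0)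
    (hσpos : ∀ i, (σ i).PosSemidef) (hσtr : ∀ i, (σ i).trace = 1) :
    negativityA'A''B (∑ i, (p i : ℂ) • ((φ i) ⊗ₖ (σ i))) =
      ∑ i, (p i : ℂ) * negativityAB (σ i) := by
  classical
  set ρ : Matrix (a' × a'' × b) (a' × a'' × b) ℂ := ∑ i, (p i : ℂ) • ((φ i) ⊗ₖ (σ i)) with hρ
  set N : ι → Matrix (a'' × b) (a'' × b) ℂ := fun i => ptB (σ i) with hN
  -- partial transpose of the sum
  have hpt : ptB3 ρ = ∑ i, (p i : ℂ) • ((φ i) ⊗ₖ (N i)) := by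
    ext ⟨x1, x2, x3⟩ ⟨y1, y2, y3⟩
    simp [ptB3, ptB, hρ, hN, Matrix.sum_apply, kroneckerMap_apply]
  -- the candidate absolute value
  set S : Matrix (a' × a'' × b) (a' × a'' × b) ℂ :=
    ∑ i, (p i : ℂ) • ((φ i) ⊗ₖ matAbs (N i)) with hS
  have hSpsd : S.PosSemidef :=
    psd_sum fun i => psd_realSmul _ (hp i)
      (psd_kron (hφpos i) (matAbs_psd _))
  have hsq : S * S = (ptB3 ρ)ᴴ * (ptB3 ρ) := by
    rw [hpt, hS]
    rw [Finset.sum_mul_sum, conjTranspose_sum, Finset.sum_mul_sum]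
    refine Finset.sum_congr rfl fun i _ => Finset.sum_congr rfl fun j _ => ?_
    rw [conjTranspose_smul, kron_conjTranspose, (hφpos i).1.eq, RCLike.star_def,
      Complex.conj_ofReal]
    rw [smul_mul_smul_comm, smul_mul_smul_comm, ← mul_kronecker_mul, ← mul_kronecker_mul]
    by_cases hij : i = j
    · subst hij
      have habs2 : matAbs (N i) * matAbs (N i) = (N i)ᴴ * N i :=
        matAbs_mul_self (N i)
      rw [habs2]
    · rw [hφorth i j hij]
      simp
  have habs : matAbs (ptB3 ρ) = S := matAbs_eq hSpsd hsq
  -- traces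
  have htrS : traceNorm (ptB3 ρ) = ∑ i, (p i : ℂ) * traceNorm (N i) := by
    rw [traceNorm, habs, hS, Matrix.trace_sum]
    refine Finset.sum_congr rfl fun i _ => ?_
    rw [Matrix.trace_smul, trace_kronecker, hφtr i, one_mul, smul_eq_mul, traceNorm]
  have htrρ : ρ.trace = ∑ i, (p i : ℂ) * (σ i).trace := by
    rw [hρ, Matrix.trace_sum]
    refine Finset.sum_congr rfl fun i _ => ?_
    rw [Matrix.trace_smul, trace_kronecker, hφtr i, one_mul, smul_eq_mul]
  rw [negativityA'A''B, htrS, htrρ, ← Finset.sum_sub_distrib, Finset.mul_sum]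
  refine Finset.sum_congr rfl fun i _ => ?_
  rw [negativityAB]
  ring
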